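/- Let Λ be a finitely generated free ℤ-module with a nondegenerate symmetric bilinear form b and an isometric involution σ, and let M ⊆ Λ be a σ-invariant submodule on which b is nondegenerate, with orthogonal complement M^⊥. Assume the finite quotient Q = Λ/(M ⊕ M^⊥) has no element of order 2. Then M^{σ=−1} ⊕ (M^⊥)^{σ=−1} is a finite-index submodule of Λ^{σ=−1} of index q = |Q^{σ=−1}|, and the Gram determinants of the restricted forms satisfy det(M^{σ=−1}) · det((M^⊥)^{σ=−1}) = q² · det(Λ^{σ=−1}), where N^{σ=−1} = {x ∈ N : σx = −x}. -/

import Mathlib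

/-- The orthogonal complement `M^⊥ = {x : b(x, m) = 0 for all m ∈ M}`. -/
def orthoComp {Λ : Type*} [AddCommGroup Λ] [Module ℤ Λ]
    (b : Λ →ₗ[ℤ] Λ →ₗ[ℤ] ℤ) (M : Submodule ℤ Λ) : Submodule ℤ Λ where
  carrier := {x | ∀ m ∈ M, b x m = 0}
  add_mem' := by
    intro a c ha hc m hm
    simp [ha m hm, hc m hm]
  zero_mem' := by
    intro m hm
    simp
  smul_mem' := by
    intro n x hx m hm
    simp [hx m hm]

lemma mem_orthoComp {Λ : Type*} [AddCommGroup Λ] [Module ℤ Λ]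
    (b : Λ →ₗ[ℤ] Λ →ₗ[ℤ] ℤ) (M : Submodule ℤ Λ) (x : Λ) :
    x ∈ orthoComp b M ↔ ∀ m ∈ M, b x m = 0 := Iff.rfl

lemma lemB {L N' : Type*} [AddCommGroup L] [Module ℤ L]
    [AddCommGroup N'] [Module ℤ N'] {n : ℕ}
    (bL : Module.Basis (Fin n) ℤ L) (f : N' →ₗ[ℤ] L) (hf : Function.Injective f)
    (bN : Module.Basis (Fin n) ℤ N') :
    ((bL.toMatrix (f ∘ bN)).det).natAbs = Nat.card (L ⧸ LinearMap.range f) := by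
  classical
  letI : Module ℤ ↥(LinearMap.range f) := (LinearMap.range f).module
  obtain ⟨m, snf⟩ := (LinearMap.range f).smithNormalForm bL
  let e := LinearEquiv.ofInjective f hf
  let bNmap := snf.bN.map e.symm
  have hmn : m = n := by simpa using (Fintype.card_congr (bNmap.indexEquiv bN))
  subst hmn
  have hrhs : Nat.card (L ⧸ LinearMap.range f) = (∏ i, (snf.a i).natAbs) := by
    have h1 : Nat.card (L ⧸ LinearMap.range f) = (LinearMap.range f).toAddSubgroup.index := rfl
    rw [h1, snf.toAddSubgroup_index_eq_pow_mul_prod]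
    simp [Int.index_zmultiples]
  let g : Fin m ≃ Fin m := Equiv.ofBijective snf.f (Finite.injective_iff_bijective.mp snf.f.injective)
  let e1 : L ≃ₗ[ℤ] N' := bL.equiv bN (Equiv.refl _)
  let e2 : L ≃ₗ[ℤ] N' := snf.bM.equiv bNmap g.symm
  have hdet1 : (bL.toMatrix (f ∘ bN)).det = LinearMap.det (f ∘ₗ (e1 : L →ₗ[ℤ] N')) := by
    rw [← Module.Basis.det_apply, Module.Basis.det_comp_basis]
  have hassoc := LinearMap.associated_det_comp_equiv f e1 e2
  have hfy : ∀ y : LinearMap.range f, f (e.symm y) = (y : L) := by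
    intro y
    conv_rhs => rw [← LinearEquiv.apply_symm_apply e y]
    rw [LinearEquiv.ofInjective_apply]
  have hfe : ∀ i, (f ∘ₗ (e2 : L →ₗ[ℤ] N')) (snf.bM i) = snf.a (g.symm i) • snf.bM i := by
    intro i
    have h2 : (e2 : L →ₗ[ℤ] N') (snf.bM i) = e.symm (snf.bN (g.symm i)) := by
      simp [e2, Module.Basis.equiv_apply, bNmap]
    have h3 : snf.f (g.symm i) = i := g.apply_symm_apply i
    rw [LinearMap.comp_apply, h2, hfy, snf.snf, h3]
    exact Int.cast_smul_eq_zsmul ℤ _ _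
  have hmat : LinearMap.toMatrix snf.bM snf.bM (f ∘ₗ (e2 : L →ₗ[ℤ] N')) =
      Matrix.diagonal (fun i => snf.a (g.symm i)) := by
    ext i j
    rw [LinearMap.toMatrix_apply, hfe]
    by_cases h : i = j
    · subst h; simp [Matrix.diagonal_apply_eq, Finsupp.single_eq_same]
    · simp [Matrix.diagonal_apply_ne _ h, Finsupp.single_eq_of_ne h]
  have hdet2 : LinearMap.det (f ∘ₗ (e2 : L →ₗ[ℤ] N')) = ∏ i, snf.a (g.symm i) := by
    rw [← LinearMap.det_toMatrix snf.bM, hmat, Matrix.det_diagonal]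
  calc ((bL.toMatrix (f ∘ bN)).det).natAbs
      = (LinearMap.det (f ∘ₗ (e2 : L →ₗ[ℤ] N'))).natAbs := by
        rw [hdet1]; exact Int.associated_iff_natAbs.mp hassoc
    _ = (∏ i, snf.a (g.symm i)).natAbs := by rw [hdet2]
    _ = ∏ i, (snf.a (g.symm i)).natAbs := map_prod Int.natAbsHom _ Finset.univ
    _ = ∏ i, (snf.a i).natAbs := Equiv.prod_comp g.symm (fun i => (snf.a i).natAbs)
    _ = Nat.card (L ⧸ LinearMap.range f) := hrhs.symm


set_option maxHeartbeats 1600000 in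
/-- Let `Λ` be a finitely generated free `ℤ`-module with a nondegenerate
symmetric bilinear form `b` and an isometric involution `σ`, and `M ⊆ Λ` a
`σ`-invariant submodule on which `b` is nondegenerate, with orthogonal complement
`M^⊥`.  Assume the quotient `Q = Λ/(M ⊕ M^⊥)` (with its induced involution) has no
element of order 2.  Then `M^{σ=−1} ⊕ (M^⊥)^{σ=−1}` is a finite-index submodule of
`Λ^{σ=−1}` of index `q = |Q^{σ=−1}|`, and the Gram determinants of the restricted
forms satisfy `det(M^{σ=−1}) · det((M^⊥)^{σ=−1}) = q² · det(Λ^{σ=−1})`. -/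
theorem det_antiInvariants_identity
    {Λ : Type*} [AddCommGroup Λ] [Module.Free ℤ Λ] [Module.Finite ℤ Λ]
    (b : Λ →ₗ[ℤ] Λ →ₗ[ℤ] ℤ) (hbsymm : ∀ x y, b x y = b y x)
    (hbnd : ∀ x : Λ, (∀ y, b x y = 0) → x = 0)
    (σ : Λ →ₗ[ℤ] Λ) (hσ : ∀ x, σ (σ x) = x)
    (hisom : ∀ x y, b (σ x) (σ y) = b x y)
    (M : Submodule ℤ Λ) (hMσ : ∀ x ∈ M, σ x ∈ M)
    (hMnd : ∀ x ∈ M, (∀ y ∈ M, b x y = 0) → x = 0)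
    (hD : M ⊔ orthoComp b M ≤ (M ⊔ orthoComp b M).comap σ)
    (hno2 : ∀ y : Λ ⧸ (M ⊔ orthoComp b M), 2 • y = 0 → y = 0) :
    -- the anti-invariant parts of `M` and of `M^⊥` intersect trivially
    (M ⊓ LinearMap.ker (σ + LinearMap.id)) ⊓
        (orthoComp b M ⊓ LinearMap.ker (σ + LinearMap.id)) = ⊥ ∧
    -- their sum has finite index `q = |Q^{σ=−1}|` in `Λ^{σ=−1}`
    Nat.card
        ((LinearMap.ker (σ + LinearMap.id) : Submodule ℤ Λ) ⧸
          (Submodule.comap (LinearMap.ker (σ + LinearMap.id)).subtype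
            ((M ⊓ LinearMap.ker (σ + LinearMap.id)) ⊔
              (orthoComp b M ⊓ LinearMap.ker (σ + LinearMap.id))))) =
      Nat.card {y : Λ ⧸ (M ⊔ orthoComp b M) //
          Submodule.mapQ (M ⊔ orthoComp b M) (M ⊔ orthoComp b M) σ hD y = -y} ∧
    Nat.card {y : Λ ⧸ (M ⊔ orthoComp b M) //
        Submodule.mapQ (M ⊔ orthoComp b M) (M ⊔ orthoComp b M) σ hD y = -y} ≠ 0 ∧
    -- the determinant identity, for arbitrary bases of the three anti-invariant lattices
    ∀ (m1 m2 m3 : ℕ)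
      (vM : Module.Basis (Fin m1) ℤ (M ⊓ LinearMap.ker (σ + LinearMap.id) : Submodule ℤ Λ))
      (vP : Module.Basis (Fin m2) ℤ
        (orthoComp b M ⊓ LinearMap.ker (σ + LinearMap.id) : Submodule ℤ Λ))
      (vE : Module.Basis (Fin m3) ℤ (LinearMap.ker (σ + LinearMap.id) : Submodule ℤ Λ)),
      (Matrix.of fun i j => b (vM i : Λ) (vM j : Λ)).det *
          (Matrix.of fun i j => b (vP i : Λ) (vP j : Λ)).det =
        (Nat.card {y : Λ ⧸ (M ⊔ orthoComp b M) //
            Submodule.mapQ (M ⊔ orthoComp b M) (M ⊔ orthoComp b M) σ hD y = -y} : ℤ) ^ 2 *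
          (Matrix.of fun i j => b (vE i : Λ) (vE j : Λ)).det := by
  classical
  set K : Submodule ℤ Λ := LinearMap.ker (σ + LinearMap.id) with hKdef
  set D : Submodule ℤ Λ := M ⊔ orthoComp b M with hDdef
  set A : Submodule ℤ Λ := M ⊓ K with hAdef
  set B : Submodule ℤ Λ := orthoComp b M ⊓ K with hBdef
  have hKmem : ∀ x : Λ, x ∈ K ↔ σ x = -x := by
    intro x
    rw [hKdef, LinearMap.mem_ker, LinearMap.add_apply, LinearMap.id_apply,
      add_eq_zero_iff_eq_neg]
  -- σ preserves orthoComp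
  have hPσ : ∀ x ∈ orthoComp b M, σ x ∈ orthoComp b M := by
    intro x hx m hm
    have h1 : b (σ x) m = b (σ x) (σ (σ m)) := by rw [hσ m]
    rw [h1, hisom]
    exact hx (σ m) (hMσ m hm)
  -- M ∩ M^⊥ = 0
  have hMP : M ⊓ orthoComp b M = ⊥ := by
    rw [eq_bot_iff]
    intro x hx
    have := hMnd x hx.1 (fun y hy => hx.2 y hy)
    simpa using this
  -- first conjunct
  have conj1 : A ⊓ B = ⊥ := by
    rw [eq_bot_iff]
    intro x hx
    have hx' : x ∈ M ⊓ orthoComp b M := ⟨hx.1.1, hx.2.1⟩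
    rw [hMP] at hx'
    exact hx'
  -- basis of M and Gram determinant
  let ι := Module.Free.ChooseBasisIndex ℤ M
  let bM0 : Module.Basis ι ℤ M := Module.Free.chooseBasis ℤ M
  let G : Matrix ι ι ℤ := Matrix.of fun i j => b (bM0 i : Λ) (bM0 j : Λ)
  have aux_span : ∀ x : Λ, (∀ i, b x (bM0 i : Λ) = 0) → ∀ y ∈ M, b x y = 0 := by
    intro x hx y hy
    have hrep := bM0.sum_repr ⟨y, hy⟩
    have hy' : y = ∑ i, (bM0.repr ⟨y, hy⟩) i • ((bM0 i : M) : Λ) := by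
      have := congrArg (M.subtype) hrep
      simp only [map_sum, map_smul, Submodule.subtype_apply] at this
      exact this.symm
    rw [hy', map_sum]
    simp [hx]
  have hGdet : G.det ≠ 0 := by
    intro h0
    obtain ⟨c, hc0, hc⟩ := Matrix.exists_mulVec_eq_zero_iff.mpr h0
    have hm0 : (∑ i, c i • bM0 i : M) = 0 := by
      have hb : ∀ i, b ((∑ j, c j • bM0 j : M) : Λ) (bM0 i : Λ) = 0 := by
        intro i
        have h1 : b (bM0 i : Λ) ((∑ j, c j • bM0 j : M) : Λ) = 0 := by
          have h2 : ((∑ j, c j • bM0 j : M) : Λ) = ∑ j, c j • (bM0 j : Λ) := by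
            simp [map_sum]
          rw [h2, map_sum]
          have := congrFun hc i
          simpa [Matrix.mulVec, dotProduct, G, mul_comm] using this
        rw [hbsymm]; exact h1
      have hmem : ((∑ j, c j • bM0 j : M) : Λ) ∈ M := (∑ j, c j • bM0 j : M).2
      have := hMnd _ hmem (aux_span _ hb)
      exact Subtype.ext this
    have hlin := Fintype.linearIndependent_iff.mp bM0.linearIndependent c hm0
    exact hc0 (funext hlin)
  have hdx : ∀ x : Λ, G.det • x ∈ D := by
    intro x
    set v : ι → ℤ := fun i => b (bM0 i : Λ) x with hvdef
    set c : ι → ℤ := G.adjugate.mulVec v with hcdef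
    set mm : Λ := ∑ i, c i • (bM0 i : Λ) with hmmdef
    have hmmM : mm ∈ M := sum_mem fun i _ => Submodule.smul_mem _ _ (bM0 i).2
    have hbmm : ∀ i, b (bM0 i : Λ) mm = G.det * v i := by
      intro i
      have h2 : b (bM0 i : Λ) mm = ∑ j, c j * G i j := by
        rw [hmmdef, map_sum]
        simp [G, mul_comm]
      rw [h2]
      have h3 : ∑ j, c j * G i j = (G.mulVec c) i := by
        simp [Matrix.mulVec, dotProduct, mul_comm]
      rw [h3, hcdef, Matrix.mulVec_mulVec, Matrix.mul_adjugate, Matrix.smul_mulVec,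
        Matrix.one_mulVec]
      simp
    have horth : G.det • x - mm ∈ orthoComp b M := by
      intro y hy
      refine aux_span _ ?_ y hy
      intro i
      rw [hbsymm]
      rw [map_sub, map_smul, hbmm]
      simp [v, smul_eq_mul]
    have hsum : G.det • x = mm + (G.det • x - mm) := by abel
    rw [hsum]
    exact Submodule.add_mem_sup hmmM horth
  -- finiteness of the quotient
  have hQfin : Finite (Λ ⧸ D) := by
    apply Module.finite_of_fg_torsion
    intro y
    obtain ⟨x, rfl⟩ := Submodule.Quotient.mk_surjective D y
    refine ⟨⟨G.det, mem_nonZeroDivisors_of_ne_zero hGdet⟩, ?_⟩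
    show G.det • (Submodule.Quotient.mk x : Λ ⧸ D) = 0
    rw [← Submodule.Quotient.mk_smul, Submodule.Quotient.mk_eq_zero]
    exact hdx x
  -- quotient involution
  set σQ : (Λ ⧸ D) →ₗ[ℤ] (Λ ⧸ D) := Submodule.mapQ D D σ hD with hσQdef
  have hσQmk : ∀ x : Λ, σQ (Submodule.Quotient.mk x) = Submodule.Quotient.mk (σ x) := by
    intro x
    rw [hσQdef, Submodule.mapQ_apply]
  -- multiplication by 2 is injective on the quotient
  have h2inj : ∀ y1 y2 : Λ ⧸ D, 2 • y1 = 2 • y2 → y1 = y2 := by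
    intro y1 y2 h
    have : (2 : ℕ) • (y1 - y2) = 0 := by
      rw [smul_sub, h, sub_self]
    have := hno2 _ this
    exact sub_eq_zero.mp this
  -- doubling is surjective on the anti-invariants of the quotient
  have hdbl : ∀ y : Λ ⧸ D, σQ y = -y → ∃ z : Λ ⧸ D, σQ z = -z ∧ 2 • z = y := by
    intro y hy
    have hT : ∀ w : {w : Λ ⧸ D // σQ w = -w}, σQ (2 • (w : Λ ⧸ D)) = -(2 • (w : Λ ⧸ D)) := by
      intro w
      rw [map_nsmul, w.2, smul_neg]
    let T : {w : Λ ⧸ D // σQ w = -w} → {w : Λ ⧸ D // σQ w = -w} :=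
      fun w => ⟨2 • (w : Λ ⧸ D), hT w⟩
    have hTinj : Function.Injective T := by
      intro w1 w2 h
      exact Subtype.ext (h2inj _ _ (congrArg Subtype.val h))
    haveI : Finite {w : Λ ⧸ D // σQ w = -w} := Subtype.finite
    have hTsurj := Finite.injective_iff_surjective.mp hTinj
    obtain ⟨z, hz⟩ := hTsurj ⟨y, hy⟩
    exact ⟨z.1, z.2, congrArg Subtype.val hz⟩
  -- the map from the anti-invariant lattice to the quotient
  let φ : K →ₗ[ℤ] (Λ ⧸ D) := D.mkQ ∘ₗ K.subtype
  have hφapp : ∀ x : K, φ x = Submodule.Quotient.mk (x : Λ) := fun x => rfl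
  have hABD : A ⊔ B ≤ D :=
    sup_le (le_trans inf_le_left le_sup_left) (le_trans inf_le_left le_sup_right)
  have hkerφ : LinearMap.ker φ = Submodule.comap K.subtype (A ⊔ B) := by
    ext x
    rw [LinearMap.mem_ker, Submodule.mem_comap, hφapp, Submodule.Quotient.mk_eq_zero]
    show (x : Λ) ∈ D ↔ (x : Λ) ∈ A ⊔ B
    constructor
    · intro hxD
      rw [hDdef] at hxD
      obtain ⟨m, hm, p, hp, hmp⟩ := Submodule.mem_sup.mp hxD
      have hσx : σ ((x : K) : Λ) = -((x : K) : Λ) := (hKmem _).mp x.2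
      rw [← hmp] at hσx
      rw [map_add] at hσx
      have hsum0 : (σ m + m) + (σ p + p) = 0 := by
        have h7 : σ m + m + (σ p + p) = (σ m + σ p) + (m + p) := by abel
        rw [h7, hσx, neg_add_cancel]
      have hmm : σ m + m ∈ M ⊓ orthoComp b M := by
        constructor
        · exact add_mem (hMσ m hm) hm
        · have heq : σ m + m = -(σ p + p) := eq_neg_of_add_eq_zero_left hsum0
          rw [heq]
          exact neg_mem (add_mem (hPσ p hp) hp)
      rw [hMP] at hmm
      have hmz : σ m + m = 0 := by simpa using hmm
      have hm0 : σ m = -m := eq_neg_of_add_eq_zero_left hmz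
      have hp0 : σ p = -p := by
        have h5 : σ p + p = 0 := by rw [hmz, zero_add] at hsum0; exact hsum0
        exact eq_neg_of_add_eq_zero_left h5
      exact Submodule.mem_sup.mpr
        ⟨m, ⟨hm, (hKmem m).mpr hm0⟩, p, ⟨hp, (hKmem p).mpr hp0⟩, hmp⟩
    · intro h
      exact hABD h
  have hrangeφ : LinearMap.range φ = LinearMap.ker (σQ + LinearMap.id) := by
    apply le_antisymm
    · rintro _ ⟨x, rfl⟩
      rw [LinearMap.mem_ker, LinearMap.add_apply, LinearMap.id_apply, hφapp, hσQmk]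
      have hx : σ ((x : K) : Λ) = -((x : K) : Λ) := (hKmem _).mp x.2
      rw [hx]
      rw [← Submodule.Quotient.mk_add]
      simp
    · intro y hy
      have hy' : σQ y = -y := by
        rw [LinearMap.mem_ker, LinearMap.add_apply, LinearMap.id_apply] at hy
        exact eq_neg_of_add_eq_zero_left hy
      obtain ⟨z, hz1, hz2⟩ := hdbl y hy'
      obtain ⟨x0, hx0⟩ := Submodule.Quotient.mk_surjective D z
      have hwK : x0 - σ x0 ∈ K := by
        rw [hKmem, map_sub, hσ]
        abel
      refine ⟨⟨x0 - σ x0, hwK⟩, ?_⟩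
      rw [hφapp]
      show (Submodule.Quotient.mk (x0 - σ x0) : Λ ⧸ D) = y
      calc (Submodule.Quotient.mk (x0 - σ x0) : Λ ⧸ D)
          = Submodule.Quotient.mk x0 - Submodule.Quotient.mk (σ x0) := by
            rw [Submodule.Quotient.mk_sub]
        _ = z - σQ z := by rw [hx0, ← hσQmk, hx0]
        _ = z + z := by rw [hz1]; abel
        _ = y := by rw [← hz2, two_nsmul]
  -- the cardinality identity
  have keycard : Nat.card (↥K ⧸ Submodule.comap K.subtype (A ⊔ B)) =
      Nat.card {y : Λ ⧸ D // σQ y = -y} := by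
    rw [← hkerφ]
    rw [Nat.card_congr (LinearMap.quotKerEquivRange φ).toEquiv]
    have e2 : {y : Λ ⧸ D // y ∈ LinearMap.range φ} ≃ {y : Λ ⧸ D // σQ y = -y} :=
      Equiv.subtypeEquivRight (fun y => by
        rw [hrangeφ, LinearMap.mem_ker, LinearMap.add_apply, LinearMap.id_apply,
          add_eq_zero_iff_eq_neg])
    exact Nat.card_congr e2
  haveI hfinsub : Finite {y : Λ ⧸ D // σQ y = -y} := Subtype.finite
  have qpos : Nat.card {y : Λ ⧸ D // σQ y = -y} ≠ 0 :=
    Nat.card_ne_zero.mpr ⟨⟨0, by simp⟩, inferInstance⟩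
  refine ⟨conj1, keycard, qpos, ?_⟩
  intro m1 m2 m3 vM vP vE
  have hAK : A ≤ K := inf_le_right
  have hBK : B ≤ K := inf_le_right
  let f : (↥A × ↥B) →ₗ[ℤ] ↥K :=
    (Submodule.inclusion hAK).comp (LinearMap.fst ℤ ↥A ↥B) +
      (Submodule.inclusion hBK).comp (LinearMap.snd ℤ ↥A ↥B)
  have hfapp : ∀ p : ↥A × ↥B, ((f p : ↥K) : Λ) = (p.1 : Λ) + (p.2 : Λ) := fun p => rfl
  have hker : LinearMap.ker f = ⊥ := by
    rw [eq_bot_iff]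
    rintro ⟨a, c⟩ h
    rw [LinearMap.mem_ker] at h
    have h0 : (a : Λ) + (c : Λ) = 0 := by
      have h1 : ((f (a, c) : ↥K) : Λ) = 0 := by rw [h]; rfl
      rw [hfapp] at h1
      exact h1
    have haB : (a : Λ) ∈ A ⊓ B := by
      refine ⟨a.2, ?_⟩
      rw [show (a : Λ) = -(c : Λ) from eq_neg_of_add_eq_zero_left h0]
      exact neg_mem c.2
    rw [conj1] at haB
    have ha0 : (a : Λ) = 0 := haB
    have hc0 : (c : Λ) = 0 := by
      rw [ha0, zero_add] at h0
      exact h0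
    have : (⟨a, c⟩ : ↥A × ↥B) = 0 := by
      rw [Prod.ext_iff]
      exact ⟨Subtype.ext ha0, Subtype.ext hc0⟩
    simp [this]
  have hfinj : Function.Injective f := LinearMap.ker_eq_bot.mp hker
  have hrange : LinearMap.range f = Submodule.comap K.subtype (A ⊔ B) := by
    apply le_antisymm
    · rintro _ ⟨p, rfl⟩
      rw [Submodule.mem_comap]
      show ((f p : ↥K) : Λ) ∈ A ⊔ B
      rw [hfapp]
      exact Submodule.add_mem_sup p.1.2 p.2.2
    · intro x hx
      rw [Submodule.mem_comap] at hx
      obtain ⟨u, hu, w, hw, huw⟩ := Submodule.mem_sup.mp hx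
      refine ⟨(⟨u, hu⟩, ⟨w, hw⟩), ?_⟩
      apply Subtype.ext
      rw [hfapp]
      exact huw
  have hcardS : Nat.card (↥K ⧸ Submodule.comap K.subtype (A ⊔ B)) ≠ 0 := by
    rw [keycard]; exact qpos
  obtain ⟨mS, snf⟩ := (Submodule.comap K.subtype (A ⊔ B)).smithNormalForm vE
  have hmS : mS = m3 := by
    have hidx : (Submodule.comap K.subtype (A ⊔ B)).toAddSubgroup.index ≠ 0 := hcardS
    have := snf.toAddSubgroup_index_ne_zero_iff.mp hidx
    simpa using this
  letI : Module ℤ ↥(Submodule.comap K.subtype (A ⊔ B)) :=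
    (Submodule.comap K.subtype (A ⊔ B)).module
  let eS : (↥A × ↥B) ≃ₗ[ℤ] ↥(Submodule.comap K.subtype (A ⊔ B)) :=
    (LinearEquiv.ofInjective f hfinj).trans (LinearEquiv.ofEq _ _ hrange)
  let bW : Module.Basis (Fin m1 ⊕ Fin m2) ℤ (↥A × ↥B) := vM.prod vP
  have h12 : m1 + m2 = m3 := by
    have hcc := Fintype.card_congr ((snf.bN.map eS.symm).indexEquiv bW)
    simp only [Fintype.card_fin, Fintype.card_sum] at hcc
    omega
  let e0 : (Fin m1 ⊕ Fin m2) ≃ Fin m3 := finSumFinEquiv.trans (finCongr h12)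
  let bW' : Module.Basis (Fin m3) ℤ (↥A × ↥B) := bW.reindex e0
  let C : Matrix (Fin m3) (Fin m3) ℤ := vE.toMatrix (f ∘ bW')
  have hC : C.det.natAbs = Nat.card {y : Λ ⧸ D // σQ y = -y} := by
    have h := lemB vE f hfinj bW'
    rw [hrange] at h
    rw [← keycard]
    exact h
  let GE : Matrix (Fin m3) (Fin m3) ℤ :=
    Matrix.of fun i j => b ((vE i : ↥K) : Λ) ((vE j : ↥K) : Λ)
  have hcoe : ∀ p : Fin m1 ⊕ Fin m2, ((f (bW p) : ↥K) : Λ) =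
      Sum.elim (fun i => ((vM i : Λ))) (fun j => ((vP j : Λ))) p := by
    intro p
    cases p with
    | inl i =>
        rw [hfapp]
        simp [bW, Module.Basis.prod_apply]
    | inr j =>
        rw [hfapp]
        simp [bW, Module.Basis.prod_apply]
  have hrep : ∀ j : Fin m3, ((f (bW' j) : ↥K) : Λ) = ∑ k, C k j • ((vE k : ↥K) : Λ) := by
    intro j
    have h := vE.sum_repr (f (bW' j))
    have h2 := congrArg (fun t : ↥K => (t : Λ)) h
    simp only [map_sum, Submodule.coe_sum] at h2
    rw [← h2]
    simp [C, Module.Basis.toMatrix_apply]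
  have hGram : (Matrix.of fun i j : Fin m3 => b ((f (bW' i) : ↥K) : Λ) ((f (bW' j) : ↥K) : Λ)) =
      C.transpose * GE * C := by
    ext i j
    show b ((f (bW' i) : ↥K) : Λ) ((f (bW' j) : ↥K) : Λ) = (C.transpose * GE * C) i j
    rw [hrep i, hrep j]
    simp only [map_sum, map_smul, LinearMap.sum_apply, LinearMap.smul_apply, smul_eq_mul,
      Matrix.mul_apply, Matrix.transpose_apply, Matrix.of_apply, Finset.mul_sum,
      Finset.sum_mul]
    apply Finset.sum_congr rfl
    intro l _
    apply Finset.sum_congr rfl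
    intro k _
    simp only [GE, Matrix.of_apply]
    ring
  have hsub : (Matrix.of fun i j : Fin m3 =>
        b ((f (bW' i) : ↥K) : Λ) ((f (bW' j) : ↥K) : Λ)).det =
      (Matrix.of fun i j => b (vM i : Λ) (vM j : Λ)).det *
        (Matrix.of fun i j => b (vP i : Λ) (vP j : Λ)).det := by
    have h1 : (Matrix.of fun i j : Fin m3 =>
          b ((f (bW' i) : ↥K) : Λ) ((f (bW' j) : ↥K) : Λ)) =
        (Matrix.of fun p q => b (Sum.elim (fun i => ((vM i : Λ))) (fun j => ((vP j : Λ))) p)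
            (Sum.elim (fun i => ((vM i : Λ))) (fun j => ((vP j : Λ))) q)).submatrix
          e0.symm e0.symm := by
      ext i j
      have hb1 : bW' i = bW (e0.symm i) := Module.Basis.reindex_apply _ _ _
      have hb2 : bW' j = bW (e0.symm j) := Module.Basis.reindex_apply _ _ _
      simp [hb1, hb2, hcoe, Matrix.submatrix_apply]
    rw [h1, Matrix.det_submatrix_equiv_self]
    have h2 : (Matrix.of fun p q => b (Sum.elim (fun i => ((vM i : Λ))) (fun j => ((vP j : Λ))) p)
            (Sum.elim (fun i => ((vM i : Λ))) (fun j => ((vP j : Λ))) q)) =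
        Matrix.fromBlocks (Matrix.of fun i j => b (vM i : Λ) (vM j : Λ)) 0 0
          (Matrix.of fun i j => b (vP i : Λ) (vP j : Λ)) := by
      ext p q
      cases p with
      | inl i =>
          cases q with
          | inl i' => simp
          | inr j' =>
              simp only [Sum.elim_inl, Sum.elim_inr, Matrix.of_apply,
                Matrix.fromBlocks_apply₁₂, Matrix.zero_apply]
              rw [hbsymm]
              exact (vP j').2.1 _ (vM i).2.1
      | inr j =>
          cases q with
          | inl i' =>
              simp only [Sum.elim_inl, Sum.elim_inr, Matrix.of_apply,
                Matrix.fromBlocks_apply₂₁, Matrix.zero_apply]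
              exact (vP j).2.1 _ (vM i').2.1
          | inr j' => simp
    rw [h2, Matrix.det_fromBlocks_zero₂₁]
  have hq2 : ((Nat.card {y : Λ ⧸ D // σQ y = -y} : ℤ))^2 = C.det^2 := by
    rw [← hC]
    rw [Int.natAbs_sq]
  calc (Matrix.of fun i j => b (vM i : Λ) (vM j : Λ)).det *
        (Matrix.of fun i j => b (vP i : Λ) (vP j : Λ)).det
      = (Matrix.of fun i j : Fin m3 =>
          b ((f (bW' i) : ↥K) : Λ) ((f (bW' j) : ↥K) : Λ)).det := hsub.symm
    _ = C.transpose.det * GE.det * C.det := by rw [hGram, Matrix.det_mul, Matrix.det_mul]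
    _ = (Nat.card {y : Λ ⧸ D // σQ y = -y} : ℤ)^2 *
          (Matrix.of fun i j => b (vE i : Λ) (vE j : Λ)).det := by
        rw [Matrix.det_transpose, hq2]
        ring
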